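/- Let β : V × V → L ⊕ L arise from a symmetric bilinear form α via β(X,Y) = (α(X,Y)+α(JX,JY), α(X,JY)−α(JX,Y)), and suppose β is flat with respect to the signature (p,p) form on L ⊕ L. Let X be a regular element of β with β restricted to V × ker β_X nonzero. Then there exists a nonzero light-like vector v ∈ L such that span{v} ⊕ span{v} ⊆ S(β|_{V × ker β_X}) ⊆ β_X(V) ∩ (β_X(V))^⊥. Moreover, if (v',w') ∈ β_X(V) with both v', w' light-like or zero vectors of L, then v', w' ∈ span{v}. -/

import Mathlib

open Polynomial Matrix Module

lemma dual_sep {W : Type*} [AddCommGroup W] [Module ℝ W]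
    (U : Submodule ℝ W) (x : W) (hx : x ∉ U) :
    ∃ f : W →ₗ[ℝ] ℝ, (∀ u ∈ U, f u = 0) ∧ f x = 1 := by
  have hπx : U.mkQ x ≠ 0 := by
    simpa [Submodule.Quotient.mk_eq_zero] using hx
  obtain ⟨φ, hφ⟩ : ∃ φ : Module.Dual ℝ (W ⧸ U), φ (U.mkQ x) ≠ 0 := by
    by_contra h
    push_neg at h
    exact hπx ((Module.forall_dual_apply_eq_zero_iff ℝ _).mp h)
  refine ⟨(φ (U.mkQ x))⁻¹ • (φ ∘ₗ U.mkQ), ?_, ?_⟩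
  · intro u hu
    have h0 : U.mkQ u = 0 := (Submodule.Quotient.mk_eq_zero U).mpr hu
    simp [h0]
  · simp only [LinearMap.smul_apply, LinearMap.comp_apply, smul_eq_mul]
    exact inv_mul_cancel₀ hφ

lemma moore {V W : Type*} [AddCommGroup V] [Module ℝ V] [FiniteDimensional ℝ V]
    [AddCommGroup W] [Module ℝ W] [FiniteDimensional ℝ W]
    (β : V →ₗ[ℝ] V →ₗ[ℝ] W) (X : V)
    (hreg : ∀ Z : V, Module.finrank ℝ (LinearMap.range (β Z)) ≤
      Module.finrank ℝ (LinearMap.range (β X)))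
    (Y Z : V) (hZ : β X Z = 0) : β Y Z ∈ LinearMap.range (β X) := by
  by_contra hmem
  set U := LinearMap.range (β X) with hU
  set r := finrank ℝ U with hr
  obtain ⟨f, hfU, hfx⟩ := dual_sep U (β Y Z) hmem
  obtain ⟨U', hcompl⟩ := Submodule.exists_isCompl U
  set P := U.linearProjOfIsCompl U' hcompl with hP
  let b : Basis (Fin r) ℝ U := finBasis ℝ U
  have hbmem : ∀ i, ∃ y, β X y = (b i : W) := fun i => LinearMap.mem_range.mp (b i).2
  choose Yi hYi using hbmem
  let g : Fin r → (W →ₗ[ℝ] ℝ) := fun j => (b.coord j) ∘ₗ P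
  let F : Fin (r+1) → (W →ₗ[ℝ] ℝ) := Fin.snoc g f
  let ι : Fin (r+1) → V := Fin.snoc Yi Z
  -- key evaluations of the g's on U
  have hgb : ∀ (j i : Fin r), g j (β X (Yi i)) = if i = j then 1 else 0 := by
    intro j i
    have : P (b i : W) = b i := Submodule.linearProjOfIsCompl_apply_left hcompl (b i)
    simp [g, hYi, this, Basis.coord_apply, Basis.repr_self, Finsupp.single_apply]
  have hfb : ∀ i : Fin r, f (β X (Yi i)) = 0 := by
    intro i
    rw [hYi]
    exact hfU _ (b i).2
  -- the polynomial matrix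
  let Pm : Matrix (Fin (r+1)) (Fin (r+1)) ℝ[X] :=
    Matrix.of fun j i =>
      Fin.lastCases (Polynomial.C (F j (β Y Z)))
        (fun i' => Polynomial.C (F j (β X (Yi i'))) +
          Polynomial.X * Polynomial.C (F j (β Y (Yi i')))) i
  -- evaluation at 0 is upper triangular with unit diagonal
  have hmapdet : ∀ t : ℝ, (Pm.map (Polynomial.eval t)).det = Polynomial.eval t Pm.det := by
    intro t
    rw [← Polynomial.coe_evalRingHom]
    rw [show Pm.map ⇑(Polynomial.evalRingHom t) = (Polynomial.evalRingHom t).mapMatrix Pm from rfl]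
    rw [← RingHom.map_det]
  have hdet0 : Polynomial.eval 0 Pm.det = 1 := by
    rw [← hmapdet]
    rw [Matrix.det_of_upperTriangular]
    · rw [Finset.prod_eq_one]
      intro j _
      refine Fin.lastCases ?_ (fun j' => ?_) j
      · simp [Pm, F, Fin.snoc_last, hfx]
      · simp [Pm, F, Fin.snoc_castSucc, hgb]
    · intro i j hij
      have hjne : j ≠ Fin.last r := by
        intro h
        rw [h] at hij
        exact absurd hij (not_lt.mpr (Fin.le_last i))
      obtain ⟨j', rfl⟩ := Fin.exists_castSucc_eq.mpr hjne
      induction i using Fin.lastCases with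
      | last => simp [Pm, F, Fin.snoc_last, hfb]
      | cast i' =>
        have hne : j' ≠ i' := by
          simp only [id] at hij
          exact fun h => absurd (h ▸ hij) (lt_irrefl _)
        simp [Pm, F, Fin.snoc_castSucc, hgb, hne]
  have hqne : Pm.det ≠ 0 := by
    intro h
    rw [h] at hdet0
    simp at hdet0
  have hfin : ({t : ℝ | Pm.det.IsRoot t} ∪ {0}).Finite :=
    (Polynomial.finite_setOf_isRoot hqne).union (Set.finite_singleton 0)
  obtain ⟨t, ht⟩ := hfin.infinite_compl.nonempty
  simp only [Set.mem_compl_iff, Set.mem_union, Set.mem_setOf_eq, Set.mem_singleton_iff,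
    not_or] at ht
  obtain ⟨ht1, ht2⟩ := ht
  set Xt := X + t • Y with hXt
  have hXtv : ∀ v : V, β Xt v = β X v + t • β Y v := by
    intro v
    simp [Xt, map_add, _root_.map_smul, LinearMap.add_apply, LinearMap.smul_apply]
  have hXtZ : β Xt Z = t • β Y Z := by rw [hXtv, hZ, zero_add]
  -- the real matrix of F j (β Xt (ι i))
  set Mhat : Matrix (Fin (r+1)) (Fin (r+1)) ℝ :=
    Matrix.of (fun j i => F j (β Xt (ι i))) with hMhatdef
  have hMhat : Mhat = (Pm.map (Polynomial.eval t)).updateCol (Fin.last r)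
      (t • fun j => F j (β Y Z)) := by
    ext j i
    induction i using Fin.lastCases with
    | last =>
      simp [Mhat, ι, Fin.snoc_last, hXtZ, Matrix.updateCol_apply, _root_.map_smul]
    | cast i' =>
      have hne : (i'.castSucc : Fin (r+1)) ≠ Fin.last r := (Fin.castSucc_lt_last i').ne
      rw [Matrix.updateCol_apply, if_neg hne]
      simp only [Mhat, Matrix.of_apply, ι, Fin.snoc_castSucc, Matrix.map_apply, Pm,
        Fin.lastCases_castSucc, Polynomial.eval_add, Polynomial.eval_mul, Polynomial.eval_C,
        Polynomial.eval_X]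
      rw [hXtv, map_add, _root_.map_smul]
      simp [smul_eq_mul, mul_comm]
  have hdetMhat : Mhat.det = t * Polynomial.eval t Pm.det := by
    rw [hMhat, Matrix.det_updateCol_smul]
    congr 1
    have hcol : (fun j => F j (β Y Z)) = fun j => (Pm.map (Polynomial.eval t)) j (Fin.last r) := by
      funext j
      simp [Pm]
    rw [hcol, Matrix.updateCol_eq_self, hmapdet]
  have hdetne : Mhat.det ≠ 0 := by
    rw [hdetMhat]
    exact mul_ne_zero ht2 ht1
  have hunit : IsUnit Mhat.det := isUnit_iff_ne_zero.mpr hdetne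
  -- surjectivity of (pi F) ∘ β Xt
  have key : ∀ d : Fin (r+1) → ℝ,
      (LinearMap.pi F) (β Xt (∑ i, d i • ι i)) = Mhat.mulVec d := by
    intro d
    funext j
    simp only [LinearMap.pi_apply, map_sum, _root_.map_smul, smul_eq_mul,
      Matrix.mulVec, dotProduct, Mhat, Matrix.of_apply]
    exact Finset.sum_congr rfl fun i _ => mul_comm _ _
  have hsurj : LinearMap.range ((LinearMap.pi F) ∘ₗ β Xt) = ⊤ := by
    rw [LinearMap.range_eq_top]
    intro c
    refine ⟨∑ i, (Mhat⁻¹.mulVec c) i • ι i, ?_⟩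
    rw [LinearMap.comp_apply, key, Matrix.mulVec_mulVec, Matrix.mul_nonsing_inv _ hunit,
      Matrix.one_mulVec]
  have hle : r + 1 ≤ r := by
    have h1 : finrank ℝ (LinearMap.range ((LinearMap.pi F) ∘ₗ β Xt)) = r + 1 := by
      rw [hsurj]
      simp [finrank_top, Module.finrank_fintype_fun_eq_card]
    have h2 : LinearMap.range ((LinearMap.pi F) ∘ₗ β Xt)
        = Submodule.map (LinearMap.pi F) (LinearMap.range (β Xt)) := LinearMap.range_comp _ _
    have h3 : finrank ℝ (Submodule.map (LinearMap.pi F) (LinearMap.range (β Xt)))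
        ≤ finrank ℝ (LinearMap.range (β Xt)) := Submodule.finrank_map_le _ _
    have h4 := hreg Xt
    rw [h2] at h1
    omega
  omega

lemma lorentz_null {L : Type*} [AddCommGroup L] [Module ℝ L]
    (BL : LinearMap.BilinForm ℝ L) (hLsymm : BL.IsSymm)
    (w : L) (hw : BL w w = -1) (hpos : ∀ x : L, BL x w = 0 → x ≠ 0 → 0 < BL x x)
    (u v : L) (hu : BL u u = 0) (hv : BL v v = 0) (huv : BL u v = 0)
    (hvne : v ≠ 0) : u ∈ Submodule.span ℝ {v} := by
  have hsym : ∀ x y : L, BL x y = BL y x := fun x y => hLsymm.eq x y |>.symm ▸ rfl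
  set a := BL u w with ha
  set bb := BL v w with hbb
  set u0 := u + a • w with hu0def
  set v0 := v + bb • w with hv0def
  have hwu : BL w u = a := by rw [ha]; exact (hsym u w).symm
  have hwv : BL w v = bb := by rw [hbb]; exact (hsym v w).symm
  have hvu : BL v u = 0 := by rw [← huv]; exact hsym v u |>.symm ▸ rfl
  have hu0w : BL u0 w = 0 := by
    simp only [hu0def, map_add, _root_.map_smul, LinearMap.add_apply, LinearMap.smul_apply,
      smul_eq_mul, hw]
    ring
  have hv0w : BL v0 w = 0 := by
    simp only [hv0def, map_add, _root_.map_smul, LinearMap.add_apply, LinearMap.smul_apply,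
      smul_eq_mul, hw]
    ring
  have hu0u0 : BL u0 u0 = a * a := by
    simp only [hu0def, map_add, _root_.map_smul, LinearMap.add_apply, LinearMap.smul_apply,
      LinearMap.map_smul, smul_eq_mul, hw, hu, hwu]
    rw [← ha]
    ring
  have hv0v0 : BL v0 v0 = bb * bb := by
    simp only [hv0def, map_add, _root_.map_smul, LinearMap.add_apply, LinearMap.smul_apply,
      smul_eq_mul, hw, hv, hwv]
    rw [← hbb]
    ring
  have hu0v0 : BL u0 v0 = a * bb := by
    simp only [hu0def, hv0def, map_add, _root_.map_smul, LinearMap.add_apply,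
      LinearMap.smul_apply, smul_eq_mul, hw, huv, hwv]
    rw [← ha]
    ring
  have hbne : bb ≠ 0 := by
    intro h
    have hv0z : v0 = v := by rw [hv0def, h, zero_smul, add_zero]
    have : (0:ℝ) < BL v0 v0 := hpos v0 hv0w (hv0z ▸ hvne)
    rw [hv0v0, h] at this
    simp at this
  set x := u0 - (a / bb) • v0 with hxdef
  have hxw : BL x w = 0 := by
    simp only [hxdef, map_sub, _root_.map_smul, LinearMap.sub_apply, LinearMap.smul_apply,
      smul_eq_mul, hu0w, hv0w]
    ring
  have hxx : BL x x = 0 := by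
    have hBu0 : BL u0 ((a / bb) • v0) = (a / bb) * (a * bb) := by
      rw [show BL u0 ((a / bb) • v0) = (a / bb) * BL u0 v0 from by simp [smul_eq_mul], hu0v0]
    have hv0u0 : BL v0 u0 = a * bb := by rw [← hu0v0]; exact hsym v0 u0 |>.symm ▸ rfl
    simp only [hxdef, map_sub, _root_.map_smul, LinearMap.sub_apply, LinearMap.smul_apply,
      smul_eq_mul, hu0u0, hu0v0, hv0u0, hv0v0, hBu0]
    field_simp
    ring
  have hxz : x = 0 := by
    by_contra hxe
    have := hpos x hxw hxe
    rw [hxx] at this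
    exact lt_irrefl _ this
  have hu0eq : u0 = (a / bb) • v0 := by
    have := sub_eq_zero.mp hxz
    exact this
  refine Submodule.mem_span_singleton.mpr ⟨a / bb, ?_⟩
  have hueq : u = u0 - a • w := by rw [hu0def]; abel
  rw [hueq, hu0eq, hv0def, smul_add, smul_smul, div_mul_cancel₀ _ hbne]
  abel

/-- Lemma: for β flat, X regular with β|_{V×N(X)} ≠ 0, there is a nonzero light-like
v ∈ L with span{v}⊕span{v} ⊆ S(β|_{V×N(X)}) ⊆ β_X(V) ∩ β_X(V)^⊥; moreover any
(v',w') ∈ β_X(V) with v',w' light-like or zero has v',w' ∈ span{v}. -/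
theorem stmt_7 (V L : Type*) [AddCommGroup V] [Module ℝ V] [FiniteDimensional ℝ V]
    [AddCommGroup L] [Module ℝ L] [FiniteDimensional ℝ L]
    (BL : LinearMap.BilinForm ℝ L) (hLsymm : BL.IsSymm)
    (hLor : ∃ w : L, BL w w = -1 ∧ ∀ x : L, BL x w = 0 → x ≠ 0 → 0 < BL x x)
    (J : V →ₗ[ℝ] V) (hJ : J ∘ₗ J = -LinearMap.id)
    (α : V →ₗ[ℝ] V →ₗ[ℝ] L) (hαsymm : ∀ X Y : V, α X Y = α Y X)
    (β : V →ₗ[ℝ] V →ₗ[ℝ] L × L)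
    (hβ : ∀ X Y : V, β X Y = (α X Y + α (J X) (J Y), α X (J Y) - α (J X) Y))
    (Bw : LinearMap.BilinForm ℝ (L × L))
    (hBw : ∀ a b : L × L, Bw a b = BL a.1 b.1 - BL a.2 b.2)
    (hflat : ∀ X Y Z T : V, Bw (β X Y) (β Z T) = Bw (β X T) (β Z Y))
    (X : V)
    (hreg : ∀ Z : V, Module.finrank ℝ (LinearMap.range (β Z)) ≤
      Module.finrank ℝ (LinearMap.range (β X)))
    (hres : ¬ (∀ (Y : V), ∀ Z ∈ LinearMap.ker (β X), β Y Z = 0)) :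
    ∃ v : L, v ≠ 0 ∧ BL v v = 0 ∧
      (Submodule.span ℝ {v}).prod (Submodule.span ℝ {v}) ≤
        Submodule.span ℝ {z : L × L | ∃ Y Z : V, Z ∈ LinearMap.ker (β X) ∧ z = β Y Z} ∧
      Submodule.span ℝ {z : L × L | ∃ Y Z : V, Z ∈ LinearMap.ker (β X) ∧ z = β Y Z} ≤
        LinearMap.range (β X) ⊓ Bw.orthogonal (LinearMap.range (β X)) ∧
      (∀ v' w' : L, (v', w') ∈ LinearMap.range (β X) → BL v' v' = 0 → BL w' w' = 0 →
        v' ∈ Submodule.span ℝ {v} ∧ w' ∈ Submodule.span ℝ {v}) := by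
  classical
  obtain ⟨w, hw, hpos⟩ := hLor
  have hsymBL : ∀ x y : L, BL x y = BL y x := fun x y => hLsymm.eq x y |>.symm ▸ rfl
  have hJJ : ∀ T : V, J (J T) = -T := by
    intro T
    have h := LinearMap.ext_iff.mp hJ T
    simpa using h
  set U := LinearMap.range (β X) with hU
  set S := Submodule.span ℝ {z : L × L | ∃ Y Z : V, Z ∈ LinearMap.ker (β X) ∧ z = β Y Z}
    with hS
  have hBwsym : ∀ m n : L × L, Bw m n = Bw n m := by
    intro m n
    rw [hBw, hBw, hsymBL m.1 n.1, hsymBL m.2 n.2]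
  have hsigma : ∀ Y Z : V, β Y (J Z) = ((β Y Z).2, -(β Y Z).1) := by
    intro Y Z
    rw [hβ, hβ, hJJ]
    simp only [map_neg, LinearMap.neg_apply, Prod.mk.injEq]
    constructor <;> abel
  have hconj : ∀ Y Z : V, β Z Y = ((β Y Z).1, -(β Y Z).2) := by
    intro Y Z
    rw [hβ, hβ]
    simp only [Prod.mk.injEq]
    rw [hαsymm Z Y, hαsymm (J Z) (J Y), hαsymm Z (J Y), hαsymm (J Z) Y]
    constructor <;> abel
  have hkerJ : ∀ Z ∈ LinearMap.ker (β X), J Z ∈ LinearMap.ker (β X) := by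
    intro Z hZ
    have h0 : β X Z = 0 := LinearMap.mem_ker.mp hZ
    have h := hsigma X Z
    rw [h0] at h
    exact LinearMap.mem_ker.mpr (by rw [h]; simp)
  have hdiag : ∀ Z : V, (β Z Z).2 = 0 := by
    intro Z
    rw [hβ]
    simp [hαsymm Z (J Z)]
  have hSU : S ≤ U := by
    rw [hS, Submodule.span_le]
    rintro z ⟨Y, Z, hZ, rfl⟩
    exact moore β X hreg Y Z (LinearMap.mem_ker.mp hZ)
  have hSUp : S ≤ Bw.orthogonal U := by
    rw [hS, Submodule.span_le]
    rintro z ⟨Y, Z, hZ, rfl⟩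
    intro n hn
    obtain ⟨T, rfl⟩ := hn
    show Bw (β X T) (β Y Z) = 0
    rw [hBwsym, hflat Y Z X T, LinearMap.mem_ker.mp hZ]
    simp [hBw]
  have hiso : ∀ z ∈ S, ∀ z' ∈ S, Bw z z' = 0 := by
    intro z hz z' hz'
    exact (LinearMap.BilinForm.mem_orthogonal_iff.mp (hSUp hz')) z (hSU hz)
  have main : ∃ v : L, v ≠ 0 ∧ BL v v = 0 ∧ ((v, (0:L)) ∈ S) ∧ (((0:L), v) ∈ S) := by
    by_cases hcase : ∃ Z ∈ LinearMap.ker (β X), (β Z Z).1 ≠ 0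
    · obtain ⟨Z, hZ, hne⟩ := hcase
      refine ⟨(β Z Z).1, hne, ?_, ?_, ?_⟩
      · have hmem : β Z Z ∈ S := Submodule.subset_span ⟨Z, Z, hZ, rfl⟩
        have h := hiso _ hmem _ hmem
        rw [hBw, hdiag Z] at h
        simpa using h
      · have hzz : β Z Z = ((β Z Z).1, (0:L)) := Prod.ext rfl (hdiag Z)
        rw [← hzz]
        exact Submodule.subset_span ⟨Z, Z, hZ, rfl⟩
      · have hmem : ((β Z Z).2, -(β Z Z).1) ∈ S := by
          rw [← hsigma Z Z]
          exact Submodule.subset_span ⟨Z, J Z, hkerJ Z hZ, rfl⟩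
        rw [hdiag Z] at hmem
        have := S.neg_mem hmem
        simpa using this
    · push_neg at hcase
      push_neg at hres
      obtain ⟨Y₀, Z₀, hZ₀, hzne⟩ := hres
      have hzS : β Y₀ Z₀ ∈ S := Submodule.subset_span ⟨Y₀, Z₀, hZ₀, rfl⟩
      have hszS : ((β Y₀ Z₀).2, -(β Y₀ Z₀).1) ∈ S := by
        rw [← hsigma Y₀ Z₀]
        exact Submodule.subset_span ⟨Y₀, J Z₀, hkerJ Z₀ hZ₀, rfl⟩
      set a := (β Y₀ Z₀).1 with hadef
      set b2 := (β Y₀ Z₀).2 with hbdef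
      have e1 : BL a a - BL b2 b2 = 0 := by
        have h := hiso _ hzS _ hzS
        rwa [hBw] at h
      have e2 : BL a b2 = 0 := by
        have h := hiso _ hzS _ hszS
        rw [hBw] at h
        simp only [map_neg, LinearMap.map_neg] at h
        have h' : BL a b2 + BL b2 a = 0 := by
          simpa [sub_neg_eq_add] using h
        rw [hsymBL b2 a] at h'
        linarith
      have e3 : BL a a + BL b2 b2 = 0 := by
        have h := hflat Y₀ Z₀ Z₀ Y₀
        have hz00 : β Z₀ Z₀ = 0 := by
          have : β Z₀ Z₀ = ((β Z₀ Z₀).1, (β Z₀ Z₀).2) := rfl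
          rw [this, hcase Z₀ hZ₀, hdiag Z₀]
          rfl
        rw [hz00, hconj Y₀ Z₀] at h
        rw [hBw, hBw] at h
        simp only [map_neg, LinearMap.map_neg] at h
        have h0 : BL (β Y₀ Y₀).1 (0:L×L).1 - BL (β Y₀ Y₀).2 (0:L×L).2 = 0 := by simp
        rw [h0] at h
        have : BL a a - -(BL b2 b2) = 0 := by simpa [sub_neg_eq_add] using h
        linarith
      have haa : BL a a = 0 := by linarith
      have hbb : BL b2 b2 = 0 := by linarith
      by_cases hane : a = 0
      · have hbne : b2 ≠ 0 := by
          intro hb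
          apply hzne
          have : β Y₀ Z₀ = (a, b2) := rfl
          rw [this, hane, hb]
          rfl
        refine ⟨b2, hbne, hbb, ?_, ?_⟩
        · have := hszS
          rw [hane] at this
          simpa using this
        · have : β Y₀ Z₀ = (a, b2) := rfl
          rw [this, hane] at hzS
          exact hzS
      · -- a ≠ 0
        have hba : BL b2 a = 0 := by rw [hsymBL b2 a]; exact e2
        obtain ⟨μ, hμ⟩ := Submodule.mem_span_singleton.mp
          (lorentz_null BL hLsymm w hw hpos b2 a hbb haa hba hane)
        have hμ' : b2 = μ • a := hμ.symm
        have hzeq : β Y₀ Z₀ = (a, b2) := rfl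
        have hpos1 : (1 + μ^2 : ℝ) ≠ 0 := by positivity
        refine ⟨a, hane, haa, ?_, ?_⟩
        · have hcomb : ((1 + μ^2 : ℝ) • ((a, (0:L)) : L × L))
              = β Y₀ Z₀ + μ • ((β Y₀ Z₀).2, -(β Y₀ Z₀).1) := by
            rw [hzeq]
            simp only [← hadef, ← hbdef, hμ', Prod.smul_mk, Prod.mk_add_mk, smul_zero,
              smul_smul, smul_neg, Prod.mk.injEq]
            constructor
            · module
            · simp
          have hmem : β Y₀ Z₀ + μ • ((β Y₀ Z₀).2, -(β Y₀ Z₀).1) ∈ S :=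
            S.add_mem hzS (S.smul_mem μ hszS)
          rw [← hcomb] at hmem
          have := S.smul_mem (1 + μ^2 : ℝ)⁻¹ hmem
          rwa [smul_smul, inv_mul_cancel₀ hpos1, one_smul] at this
        · have hcomb : ((1 + μ^2 : ℝ) • (((0:L), a) : L × L))
              = μ • β Y₀ Z₀ - ((β Y₀ Z₀).2, -(β Y₀ Z₀).1) := by
            rw [hzeq]
            simp only [← hadef, ← hbdef, hμ', Prod.smul_mk, Prod.mk_sub_mk, smul_zero,
              smul_smul, smul_neg, Prod.mk.injEq, sub_neg_eq_add]
            constructor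
            · simp
            · module
          have hmem : μ • β Y₀ Z₀ - ((β Y₀ Z₀).2, -(β Y₀ Z₀).1) ∈ S :=
            S.sub_mem (S.smul_mem μ hzS) hszS
          rw [← hcomb] at hmem
          have := S.smul_mem (1 + μ^2 : ℝ)⁻¹ hmem
          rwa [smul_smul, inv_mul_cancel₀ hpos1, one_smul] at this
  obtain ⟨v, hvne, hvnull, hv0, h0v⟩ := main
  refine ⟨v, hvne, hvnull, ?_, le_inf hSU hSUp, ?_⟩
  · rintro ⟨x, y⟩ hxy
    rw [Submodule.mem_prod] at hxy
    obtain ⟨c, hc⟩ := Submodule.mem_span_singleton.mp hxy.1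
    obtain ⟨d, hd⟩ := Submodule.mem_span_singleton.mp hxy.2
    have hcx : c • v = x := hc
    have hdy : d • v = y := hd
    have hxyeq : ((x, y) : L × L) = c • ((v, (0:L)) : L × L) + d • (((0:L), v) : L × L) := by
      rw [← hcx, ← hdy]
      simp
    rw [hxyeq]
    exact S.add_mem (S.smul_mem c hv0) (S.smul_mem d h0v)
  · intro v' w' hvw hv' hw'
    have h1 : Bw (v', w') (v, 0) = 0 :=
      (LinearMap.BilinForm.mem_orthogonal_iff.mp (hSUp hv0)) (v', w') hvw
    have h2 : Bw (v', w') (0, v) = 0 :=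
      (LinearMap.BilinForm.mem_orthogonal_iff.mp (hSUp h0v)) (v', w') hvw
    rw [hBw] at h1 h2
    simp only [map_zero] at h1 h2
    have h1' : BL v' v = 0 := by simpa using h1
    have h2' : BL w' v = 0 := by
      have : -(BL w' v) = 0 := by simpa using h2
      linarith
    exact ⟨lorentz_null BL hLsymm w hw hpos v' v hv' hvnull h1' hvne,
      lorentz_null BL hLsymm w hw hpos w' v hw' hvnull h2' hvne⟩
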